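/- Let σ > 0, α > 0, ρ ∈ (−1, 1), and β ∈ [0, 1]. For (u, v) ∈ (0, ∞)² let C(u, v) be the 2×2 matrix with entries C₁₁ = σ² v² u^{2β}, C₁₂ = C₂₁ = ρ σ α v² u^{β}, C₂₂ = α² v² (the SABR covariance matrix). Then there is no C³ function φ : (0, ∞)² → ℝ such that for all (u, v) ∈ (0, ∞)², the Hessian matrix of φ at (u, v) equals C(u, v)⁻¹. -/

import Mathlib

open Set

/-- The Hessian matrix of `φ : ℝ × ℝ → ℝ` at `p`, via iterated Fréchet derivatives. -/
noncomputable def hess2d (φ : ℝ × ℝ → ℝ) (p : ℝ × ℝ) : Matrix (Fin 2) (Fin 2) ℝ :=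
  !![fderiv ℝ (fun q => fderiv ℝ φ q ((1 : ℝ), (0 : ℝ))) p ((1 : ℝ), (0 : ℝ)),
     fderiv ℝ (fun q => fderiv ℝ φ q ((1 : ℝ), (0 : ℝ))) p ((0 : ℝ), (1 : ℝ));
     fderiv ℝ (fun q => fderiv ℝ φ q ((0 : ℝ), (1 : ℝ))) p ((1 : ℝ), (0 : ℝ)),
     fderiv ℝ (fun q => fderiv ℝ φ q ((0 : ℝ), (1 : ℝ))) p ((0 : ℝ), (1 : ℝ))]

/-- The SABR covariance matrix at `(u, v) = p`. -/
noncomputable def sabrCov (σ α ρ β : ℝ) (p : ℝ × ℝ) : Matrix (Fin 2) (Fin 2) ℝ :=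
  !![σ ^ 2 * p.2 ^ 2 * p.1 ^ (2 * β), ρ * σ * α * p.2 ^ 2 * p.1 ^ β;
     ρ * σ * α * p.2 ^ 2 * p.1 ^ β, α ^ 2 * p.2 ^ 2]

/-- Mean value theorem specialization: zero derivative on `[1,2]` means equal endpoints. -/
private lemma mvt_eq_of_deriv_zero {f : ℝ → ℝ}
    (hf : ∀ t ∈ Set.Icc (1:ℝ) 2, HasDerivAt f 0 t) : f 2 = f 1 := by
  obtain ⟨c, _, hc⟩ := exists_hasDerivAt_eq_slope f (fun _ => 0) one_lt_two
    (fun x hx => (hf x hx).continuousAt.continuousWithinAt)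
    (fun x hx => hf x ⟨hx.1.le, hx.2.le⟩)
  have : (0:ℝ) = (f 2 - f 1) / (2 - 1) := hc
  norm_num at this
  linarith

/-- The key obstruction: if `g` has `u`-partial `P u v` and `v`-partial `Rd v`
independent of `u` with antiderivative `R`, and `P ξ 2 ≠ P ξ 1` for some range of `ξ`,
we get a contradiction (mixed increments disagree). -/
private lemma obstruction (g : ℝ × ℝ → ℝ) (P : ℝ → ℝ → ℝ) (R Rd : ℝ → ℝ)
    (hR : ∀ t : ℝ, 0 < t → HasDerivAt R (Rd t) t)
    (hu : ∀ u v : ℝ, 0 < u → 0 < v → HasDerivAt (fun s => g (s, v)) (P u v) u)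
    (hv : ∀ u v : ℝ, 0 < u → 0 < v → HasDerivAt (fun t => g (u, t)) (Rd v) v)
    (hne : ∀ ξ : ℝ, 1 < ξ → ξ < 2 → P ξ 2 ≠ P ξ 1) : False := by
  -- Step 1: for each u > 0, g(u,2) - g(u,1) = R 2 - R 1 is independent of u.
  have hF : ∀ u : ℝ, 0 < u → g (u, 2) - g (u, 1) = R 2 - R 1 := by
    intro u hu0
    have h := mvt_eq_of_deriv_zero (f := fun t => g (u, t) - R t) ?_
    · linarith
    · intro t ht
      have ht0 : (0:ℝ) < t := lt_of_lt_of_le one_pos ht.1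
      have h2 := (hv u t hu0 ht0).sub (hR t ht0)
      rw [sub_self] at h2
      exact h2
  -- Step 2: MVT in u on [1,2] for F u := g(u,2) - g(u,1).
  obtain ⟨ξ, hξ, heq⟩ := exists_hasDerivAt_eq_slope
    (fun u => g (u, 2) - g (u, 1)) (fun u => P u 2 - P u 1) one_lt_two
    (fun x hx => by
      have hx0 : (0:ℝ) < x := lt_of_lt_of_le one_pos hx.1
      exact (((hu x 2 hx0 two_pos).sub (hu x 1 hx0 one_pos)).continuousAt).continuousWithinAt)
    (fun x hx => by
      have hx0 : (0:ℝ) < x := lt_of_lt_of_le one_pos hx.1.le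
      exact (hu x 2 hx0 two_pos).sub (hu x 1 hx0 one_pos))
  rw [hF 2 two_pos, hF 1 one_pos] at heq
  norm_num at heq
  exact hne ξ hξ.1 hξ.2 (by linarith)

/-- The open quadrant is open. -/
private lemma isOpen_quadrant : IsOpen {p : ℝ × ℝ | 0 < p.1 ∧ 0 < p.2} := by
  have : {p : ℝ × ℝ | 0 < p.1 ∧ 0 < p.2} = (Ioi (0:ℝ)) ×ˢ (Ioi (0:ℝ)) := by
    ext p; simp [Set.mem_prod]
  rw [this]; exact isOpen_Ioi.prod isOpen_Ioi

/-- One-variable sections of the first partial derivatives of a `C³` function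
are differentiable, with derivatives given by the second Fréchet derivative. -/
private lemma hasDerivAt_section (φ : ℝ × ℝ → ℝ)
    (hφ : ContDiffOn ℝ 3 φ {p : ℝ × ℝ | 0 < p.1 ∧ 0 < p.2})
    (w : ℝ × ℝ) {u v : ℝ} (hu : 0 < u) (hv : 0 < v) :
    HasDerivAt (fun s => fderiv ℝ φ (s, v) w)
      (fderiv ℝ (fun q => fderiv ℝ φ q w) (u, v) ((1:ℝ), (0:ℝ))) u ∧
    HasDerivAt (fun t => fderiv ℝ φ (u, t) w)
      (fderiv ℝ (fun q => fderiv ℝ φ q w) (u, v) ((0:ℝ), (1:ℝ))) v := by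
  have hs := isOpen_quadrant
  have hg : ContDiffOn ℝ 2 (fun q => fderiv ℝ φ q w) {p : ℝ × ℝ | 0 < p.1 ∧ 0 < p.2} := by
    have h1 : ContDiffOn ℝ 2 (fun q => fderiv ℝ φ q) {p : ℝ × ℝ | 0 < p.1 ∧ 0 < p.2} :=
      hφ.fderiv_of_isOpen hs (by norm_num)
    exact h1.clm_apply contDiffOn_const
  have hgd : DifferentiableAt ℝ (fun q => fderiv ℝ φ q w) (u, v) :=
    (hg.differentiableOn (by norm_num)).differentiableAt (hs.mem_nhds ⟨hu, hv⟩)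
  have hfd := hgd.hasFDerivAt
  constructor
  · exact hfd.comp_hasDerivAt u (HasDerivAt.prodMk (hasDerivAt_id u) (hasDerivAt_const u v))
  · exact hfd.comp_hasDerivAt v (HasDerivAt.prodMk (hasDerivAt_const v u) (hasDerivAt_id v))

/-- Explicit inverse of the SABR covariance matrix. -/
private lemma sabrCov_inv (σ α ρ β : ℝ) (hσ : 0 < σ) (hα : 0 < α)
    (hρ₁ : -1 < ρ) (hρ₂ : ρ < 1) {u v : ℝ} (hu : 0 < u) (hv : 0 < v) :
    (sabrCov σ α ρ β (u, v))⁻¹ =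
      !![1 / (σ ^ 2 * (1 - ρ ^ 2) * v ^ 2 * u ^ (2 * β)),
         -ρ / (σ * α * (1 - ρ ^ 2) * v ^ 2 * u ^ β);
         -ρ / (σ * α * (1 - ρ ^ 2) * v ^ 2 * u ^ β),
         1 / (α ^ 2 * (1 - ρ ^ 2) * v ^ 2)] := by
  apply Matrix.inv_eq_right_inv
  have hX : (0:ℝ) < u ^ β := Real.rpow_pos_of_pos hu β
  have hXX : u ^ (2 * β) = u ^ β * u ^ β := by
    rw [two_mul, Real.rpow_add hu]
  have hρ : 1 - ρ ^ 2 ≠ 0 := by nlinarith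
  have hσ' : σ ≠ 0 := hσ.ne'
  have hα' : α ≠ 0 := hα.ne'
  have hv' : v ≠ 0 := hv.ne'
  have hX' : u ^ β ≠ 0 := hX.ne'
  ext i j
  fin_cases i <;> fin_cases j <;>
    · simp [sabrCov, Matrix.mul_apply, Fin.sum_univ_two, hXX, Matrix.one_apply]
      field_simp
      ring

/-- Appendix D.2: SABR is not a Hessian martingale. There is no `C³`
function `φ` on `(0,∞)²` whose Hessian equals the inverse of the SABR covariance matrix
everywhere on `(0,∞)²`. -/
theorem sabr_not_hessian_martingale (σ α ρ β : ℝ)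
    (hσ : 0 < σ) (hα : 0 < α) (hρ₁ : -1 < ρ) (hρ₂ : ρ < 1)
    (hβ₀ : 0 ≤ β) (hβ₁ : β ≤ 1) :
    ¬ ∃ φ : ℝ × ℝ → ℝ,
      ContDiffOn ℝ 3 φ {p : ℝ × ℝ | 0 < p.1 ∧ 0 < p.2} ∧
      ∀ p ∈ {p : ℝ × ℝ | 0 < p.1 ∧ 0 < p.2},
        hess2d φ p = (sabrCov σ α ρ β p)⁻¹ := by
  rintro ⟨φ, hφ, hH⟩
  have h1ρ : (0:ℝ) < 1 - ρ ^ 2 := by nlinarith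
  have hσ' : σ ≠ 0 := hσ.ne'
  have hα' : α ≠ 0 := hα.ne'
  -- Extract the four entry identities.
  have hEntry : ∀ u v : ℝ, 0 < u → 0 < v → hess2d φ (u, v) =
      !![1 / (σ ^ 2 * (1 - ρ ^ 2) * v ^ 2 * u ^ (2 * β)),
         -ρ / (σ * α * (1 - ρ ^ 2) * v ^ 2 * u ^ β);
         -ρ / (σ * α * (1 - ρ ^ 2) * v ^ 2 * u ^ β),
         1 / (α ^ 2 * (1 - ρ ^ 2) * v ^ 2)] := fun u v hu hv =>
    (hH (u, v) ⟨hu, hv⟩).trans (sabrCov_inv σ α ρ β hσ hα hρ₁ hρ₂ hu hv)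
  have e01 : ∀ u v : ℝ, 0 < u → 0 < v →
      fderiv ℝ (fun q => fderiv ℝ φ q ((1:ℝ), (0:ℝ))) (u, v) ((0:ℝ), (1:ℝ)) =
        -ρ / (σ * α * (1 - ρ ^ 2) * v ^ 2 * u ^ β) := by
    intro u v hu hv
    have := congrFun (congrFun (hEntry u v hu hv) 0) 1
    simpa [hess2d] using this
  have e00 : ∀ u v : ℝ, 0 < u → 0 < v →
      fderiv ℝ (fun q => fderiv ℝ φ q ((1:ℝ), (0:ℝ))) (u, v) ((1:ℝ), (0:ℝ)) =
        1 / (σ ^ 2 * (1 - ρ ^ 2) * v ^ 2 * u ^ (2 * β)) := by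
    intro u v hu hv
    have := congrFun (congrFun (hEntry u v hu hv) 0) 0
    simpa [hess2d] using this
  have e10 : ∀ u v : ℝ, 0 < u → 0 < v →
      fderiv ℝ (fun q => fderiv ℝ φ q ((0:ℝ), (1:ℝ))) (u, v) ((1:ℝ), (0:ℝ)) =
        -ρ / (σ * α * (1 - ρ ^ 2) * v ^ 2 * u ^ β) := by
    intro u v hu hv
    have := congrFun (congrFun (hEntry u v hu hv) 1) 0
    simpa [hess2d] using this
  have e11 : ∀ u v : ℝ, 0 < u → 0 < v →
      fderiv ℝ (fun q => fderiv ℝ φ q ((0:ℝ), (1:ℝ))) (u, v) ((0:ℝ), (1:ℝ)) =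
        1 / (α ^ 2 * (1 - ρ ^ 2) * v ^ 2) := by
    intro u v hu hv
    have := congrFun (congrFun (hEntry u v hu hv) 1) 1
    simpa [hess2d] using this
  by_cases hρ0 : ρ = 0
  · -- Use the first row function g = ∂_u φ; its v-partial is 0 but its u-partial depends on v.
    apply obstruction (fun q => fderiv ℝ φ q ((1:ℝ), (0:ℝ)))
      (fun u v => 1 / (σ ^ 2 * (1 - ρ ^ 2) * v ^ 2 * u ^ (2 * β)))
      (fun _ => 0) (fun _ => 0)
    · intro t _; exact hasDerivAt_const t 0
    · intro u v hu hv
      have h := (hasDerivAt_section φ hφ ((1:ℝ), (0:ℝ)) hu hv).1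
      rwa [e00 u v hu hv] at h
    · intro u v hu hv
      have h := (hasDerivAt_section φ hφ ((1:ℝ), (0:ℝ)) hu hv).2
      rw [e01 u v hu hv] at h
      simpa [hρ0] using h
    · intro ξ hξ1 hξ2
      have hξ0 : (0:ℝ) < ξ := lt_trans one_pos hξ1
      have hX : (0:ℝ) < ξ ^ (2 * β) := Real.rpow_pos_of_pos hξ0 _
      have hd1 : (0:ℝ) < σ ^ 2 * (1 - ρ ^ 2) * (1:ℝ) ^ 2 * ξ ^ (2 * β) := by positivity
      have hd2 : (0:ℝ) < σ ^ 2 * (1 - ρ ^ 2) * (2:ℝ) ^ 2 * ξ ^ (2 * β) := by positivity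
      have hlt : σ ^ 2 * (1 - ρ ^ 2) * (1:ℝ) ^ 2 * ξ ^ (2 * β)
          < σ ^ 2 * (1 - ρ ^ 2) * (2:ℝ) ^ 2 * ξ ^ (2 * β) := by nlinarith
      exact ne_of_lt (one_div_lt_one_div_of_lt hd1 hlt)
  · -- ρ ≠ 0: use the second row function g = ∂_v φ.
    set c : ℝ := 1 / (α ^ 2 * (1 - ρ ^ 2)) with hc
    apply obstruction (fun q => fderiv ℝ φ q ((0:ℝ), (1:ℝ)))
      (fun u v => -ρ / (σ * α * (1 - ρ ^ 2) * v ^ 2 * u ^ β))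
      (fun t => -c / t) (fun t => 1 / (α ^ 2 * (1 - ρ ^ 2) * t ^ 2))
    · intro t ht
      have h := (hasDerivAt_inv ht.ne').const_mul (-c)
      have hfun : (fun t : ℝ => -c * t⁻¹) = fun t : ℝ => -c / t := by
        funext x; ring
      rw [hfun] at h
      refine h.congr_deriv ?_
      rw [hc]
      field_simp
    · intro u v hu hv
      have h := (hasDerivAt_section φ hφ ((0:ℝ), (1:ℝ)) hu hv).1
      rwa [e10 u v hu hv] at h
    · intro u v hu hv
      have h := (hasDerivAt_section φ hφ ((0:ℝ), (1:ℝ)) hu hv).2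
      rwa [e11 u v hu hv] at h
    · intro ξ hξ1 hξ2 heq
      have hξ0 : (0:ℝ) < ξ := lt_trans one_pos hξ1
      have hX : (0:ℝ) < ξ ^ β := Real.rpow_pos_of_pos hξ0 _
      rw [div_eq_div_iff (by positivity) (by positivity)] at heq
      have : ρ * (σ * α * (1 - ρ ^ 2) * ξ ^ β) * 3 = 0 := by nlinarith
      have hprod : σ * α * (1 - ρ ^ 2) * ξ ^ β > 0 := by positivity
      rcases mul_eq_zero.1 this with h | h
      · rcases mul_eq_zero.1 h with h' | h'
        · exact hρ0 h'
        · exact hprod.ne' h'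
      · norm_num at h
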